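/- Every graph with arboricity at most b, diameter at most k, and maximum degree at most Δ has at most 4k(2b)^k · Δ^{⌊k/2⌋} + 1 vertices. -/

import Mathlib

/-- `G` has arboricity at most `b`: the edge set of `G` is the union of the edge
sets of `b` forests. -/
def ArboricityLE {V : Type*} (G : SimpleGraph V) (b : ℕ) : Prop :=
  ∃ F : Fin b → SimpleGraph V, (∀ i, (F i).IsAcyclic) ∧ (⨆ i, F i) = G

open Finset SimpleGraph

section AuxiliaryLemmas

variable {V : Type*} [Fintype V]

/-- Counting "chains" built left-to-right: the first vertex is free and each
subsequent vertex lies in a step-set of bounded size. -/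
private lemma chain_count_right (i : ℕ) (step : ℕ → V → Finset V) (c : ℕ → ℕ)
    (hc : ∀ t x, (step t x).card ≤ c t) :
    Nat.card {f : Fin (i+1) → V // ∀ t : Fin i, f t.succ ∈ step t.val (f t.castSucc)}
      ≤ Fintype.card V * ∏ t ∈ Finset.range i, c t := by
  classical
  induction i generalizing step c with
  | zero =>
      simp only [Finset.range_zero, Finset.prod_empty, mul_one]
      have e : {f : Fin 1 → V // ∀ t : Fin 0, f t.succ ∈ step t.val (f t.castSucc)} ≃ V :=
        { toFun := fun f => f.1 0
          invFun := fun v => ⟨fun _ => v, fun t => t.elim0⟩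
          left_inv := fun f => Subtype.ext (funext fun t => by
            rw [Subsingleton.elim t 0])
          right_inv := fun v => rfl }
      rw [Nat.card_congr e, Nat.card_eq_fintype_card]
  | succ m ih =>
      by_cases hc0 : c m = 0
      · haveI : IsEmpty {f : Fin (m+2) → V //
            ∀ t : Fin (m+1), f t.succ ∈ step t.val (f t.castSucc)} := by
          constructor
          rintro ⟨f, hf⟩
          have h1 := hf (Fin.last m)
          have h2 := hc m (f (Fin.last m).castSucc)
          rw [hc0, Nat.le_zero, Finset.card_eq_zero] at h2
          simp only [Fin.val_last] at h1
          rw [h2] at h1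
          · exact absurd h1 (Finset.notMem_empty _)
        rw [Nat.card_of_isEmpty]
        exact Nat.zero_le _
      · have hcpos : 0 < c m := Nat.pos_of_ne_zero hc0
        -- a total encoding function for the last step
        have hembx : ∀ x : V, ∃ g : V → Fin (c m),
            ∀ y y', y ∈ step m x → y' ∈ step m x → g y = g y' → y = y' := by
          intro x
          have h1 : Fintype.card {y // y ∈ step m x} ≤ Fintype.card (Fin (c m)) := by
            simpa [Fintype.card_coe] using hc m x
          obtain ⟨g0⟩ := Function.Embedding.nonempty_of_card_le h1
          refine ⟨fun y => if h : y ∈ step m x then g0 ⟨y, h⟩ else ⟨0, hcpos⟩, ?_⟩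
          intro y y' hy hy' hgy
          dsimp only at hgy
          rw [dif_pos hy, dif_pos hy'] at hgy
          have := g0.injective hgy
          exact Subtype.ext_iff.mp this
        choose emb hembinj using hembx
        set A := {f : Fin (m+2) → V // ∀ t : Fin (m+1), f t.succ ∈ step t.val (f t.castSucc)}
          with hA
        set B := {f : Fin (m+1) → V // ∀ t : Fin m, f t.succ ∈ step t.val (f t.castSucc)}
          with hB
        have key : ∀ t : Fin m, (t.castSucc).succ = (t.succ).castSucc := by
          intro t; ext; simp
        have Φprop : ∀ f : A, ∀ t : Fin m,
            (fun t' : Fin (m+1) => f.1 t'.castSucc) t.succ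
              ∈ step t.val ((fun t' : Fin (m+1) => f.1 t'.castSucc) t.castSucc) := by
          intro f t
          have h := f.2 t.castSucc
          simp only at h ⊢
          rw [← key t]
          simpa using h
        have Φlast : ∀ f : A, f.1 (Fin.last (m+1)) ∈ step m (f.1 (Fin.last m).castSucc) := by
          intro f
          have h := f.2 (Fin.last m)
          have : (Fin.last m).succ = Fin.last (m+1) := by ext; simp
          rw [this] at h
          simpa using h
        let Φ : A → B × Fin (c m) := fun f =>
          (⟨fun t => f.1 t.castSucc, Φprop f⟩,
            emb (f.1 (Fin.last m).castSucc) (f.1 (Fin.last (m+1))))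
        have hΦ : Function.Injective Φ := by
          intro f g h
          have h1 : (fun t : Fin (m+1) => f.1 t.castSucc) = fun t => g.1 t.castSucc := by
            have := congrArg Prod.fst h
            exact Subtype.ext_iff.mp this
          have hx : f.1 (Fin.last m).castSucc = g.1 (Fin.last m).castSucc :=
            congrFun h1 (Fin.last m)
          have h2 := congrArg Prod.snd h
          simp only [Φ] at h2
          rw [hx] at h2
          have hlast : f.1 (Fin.last (m+1)) = g.1 (Fin.last (m+1)) := by
            apply hembinj (g.1 (Fin.last m).castSucc)
            · rw [← hx]; exact Φlast f
            · exact Φlast g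
            · exact h2
          apply Subtype.ext
          funext t
          induction t using Fin.lastCases with
          | last => exact hlast
          | cast t => exact congrFun h1 t
        calc Nat.card A ≤ Nat.card (B × Fin (c m)) := Nat.card_le_card_of_injective Φ hΦ
          _ = Nat.card B * c m := by
              rw [Nat.card_prod, Nat.card_eq_fintype_card (α := Fin (c m)), Fintype.card_fin]
          _ ≤ (Fintype.card V * ∏ t ∈ Finset.range m, c t) * c m := by
              exact Nat.mul_le_mul_right _ (ih step c hc)
          _ = Fintype.card V * ∏ t ∈ Finset.range (m+1), c t := by
              rw [Finset.prod_range_succ, mul_assoc]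


/-- Counting "chains" built right-to-left: the last vertex is free and each
previous vertex lies in a step-set of bounded size. -/
private lemma chain_count_left (i : ℕ) (step : ℕ → V → Finset V) (c : ℕ → ℕ)
    (hc : ∀ t x, (step t x).card ≤ c t) :
    Nat.card {f : Fin (i+1) → V // ∀ t : Fin i, f t.castSucc ∈ step t.val (f t.succ)}
      ≤ Fintype.card V * ∏ t ∈ Finset.range i, c t := by
  classical
  induction i generalizing step c with
  | zero =>
      simp only [Finset.range_zero, Finset.prod_empty, mul_one]
      have e : {f : Fin 1 → V // ∀ t : Fin 0, f t.castSucc ∈ step t.val (f t.succ)} ≃ V :=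
        { toFun := fun f => f.1 0
          invFun := fun v => ⟨fun _ => v, fun t => t.elim0⟩
          left_inv := fun f => Subtype.ext (funext fun t => by
            rw [Subsingleton.elim t 0])
          right_inv := fun v => rfl }
      rw [Nat.card_congr e, Nat.card_eq_fintype_card]
  | succ m ih =>
      by_cases hc0 : c 0 = 0
      · haveI : IsEmpty {f : Fin (m+2) → V //
            ∀ t : Fin (m+1), f t.castSucc ∈ step t.val (f t.succ)} := by
          constructor
          rintro ⟨f, hf⟩
          have h1 := hf 0
          have h2 := hc 0 (f (0 : Fin (m+1)).succ)
          rw [hc0, Nat.le_zero, Finset.card_eq_zero] at h2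
          simp only [Fin.val_zero] at h1
          rw [h2] at h1
          exact absurd h1 (Finset.notMem_empty _)
        rw [Nat.card_of_isEmpty]
        exact Nat.zero_le _
      · have hcpos : 0 < c 0 := Nat.pos_of_ne_zero hc0
        have hembx : ∀ x : V, ∃ g : V → Fin (c 0),
            ∀ y y', y ∈ step 0 x → y' ∈ step 0 x → g y = g y' → y = y' := by
          intro x
          have h1 : Fintype.card {y // y ∈ step 0 x} ≤ Fintype.card (Fin (c 0)) := by
            simpa [Fintype.card_coe] using hc 0 x
          obtain ⟨g0⟩ := Function.Embedding.nonempty_of_card_le h1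
          refine ⟨fun y => if h : y ∈ step 0 x then g0 ⟨y, h⟩ else ⟨0, hcpos⟩, ?_⟩
          intro y y' hy hy' hgy
          dsimp only at hgy
          rw [dif_pos hy, dif_pos hy'] at hgy
          exact Subtype.ext_iff.mp (g0.injective hgy)
        choose emb hembinj using hembx
        set A := {f : Fin (m+2) → V // ∀ t : Fin (m+1), f t.castSucc ∈ step t.val (f t.succ)}
          with hA
        set B := {f : Fin (m+1) → V //
            ∀ t : Fin m, f t.castSucc ∈ (fun n => step (n+1)) t.val (f t.succ)} with hB
        have key : ∀ t : Fin m, (t.castSucc).succ = (t.succ).castSucc := by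
          intro t; ext; simp
        have Φprop : ∀ f : A, ∀ t : Fin m,
            (fun t' : Fin (m+1) => f.1 t'.succ) t.castSucc
              ∈ step (t.val + 1) ((fun t' : Fin (m+1) => f.1 t'.succ) t.succ) := by
          intro f t
          have h := f.2 t.succ
          simp only [Fin.val_succ] at h ⊢
          rw [key t]
          simpa using h
        have Φfirst : ∀ f : A, f.1 0 ∈ step 0 (f.1 1) := by
          intro f
          have h := f.2 0
          have e1 : (0 : Fin (m+1)).castSucc = (0 : Fin (m+2)) := by ext; simp
          have e2 : (0 : Fin (m+1)).succ = (1 : Fin (m+2)) := by ext; simp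
          rw [e1, e2] at h
          simpa using h
        let Φ : A → B × Fin (c 0) := fun f =>
          (⟨fun t => f.1 t.succ, Φprop f⟩, emb (f.1 1) (f.1 0))
        have hΦ : Function.Injective Φ := by
          intro f g h
          have h1 : (fun t : Fin (m+1) => f.1 t.succ) = fun t => g.1 t.succ := by
            have := congrArg Prod.fst h
            exact Subtype.ext_iff.mp this
          have hx : f.1 1 = g.1 1 := by
            have := congrFun h1 0
            simpa using this
          have h2 := congrArg Prod.snd h
          simp only [Φ] at h2
          rw [hx] at h2
          have hfirst : f.1 0 = g.1 0 := by
            apply hembinj (g.1 1)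
            · rw [← hx]; exact Φfirst f
            · exact Φfirst g
            · exact h2
          apply Subtype.ext
          funext t
          induction t using Fin.cases with
          | zero => exact hfirst
          | succ t => exact congrFun h1 t
        calc Nat.card A ≤ Nat.card (B × Fin (c 0)) := Nat.card_le_card_of_injective Φ hΦ
          _ = Nat.card B * c 0 := by
              rw [Nat.card_prod, Nat.card_eq_fintype_card (α := Fin (c 0)), Fintype.card_fin]
          _ ≤ (Fintype.card V * ∏ t ∈ Finset.range m, c (t+1)) * c 0 := by
              exact Nat.mul_le_mul_right _ (ih (fun n => step (n+1)) (fun n => c (n+1))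
                (fun t x => hc (t+1) x))
          _ = Fintype.card V * ∏ t ∈ Finset.range (m+1), c t := by
              rw [Finset.prod_range_succ', mul_assoc]


/-- Helper: in a path starting at `x`, there is at most one edge at `x`. -/
private lemma path_start_unique_edge {F : SimpleGraph V} {x r y z : V}
    (p : F.Walk x r) (hp : p.IsPath) (hy : s(x,y) ∈ p.edges) (hz : s(x,z) ∈ p.edges) :
    y = z := by
  cases p with
  | nil => simp at hy
  | cons h1 q =>
      rename_i w
      rw [Walk.edges_cons] at hy hz
      rw [Walk.cons_isPath_iff] at hp
      have hy' : y = w := by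
        rcases List.mem_cons.mp hy with h | h
        · exact Sym2.congr_right.mp h
        · exact absurd (Walk.fst_mem_support_of_mem_edges q h) hp.2
      have hz' : z = w := by
        rcases List.mem_cons.mp hz with h | h
        · exact Sym2.congr_right.mp h
        · exact absurd (Walk.fst_mem_support_of_mem_edges q h) hp.2
      rw [hy', hz']

/-- Every finite forest admits an orientation in which every vertex has
out-degree at most 1. -/
private lemma forest_orientation (F : SimpleGraph V) (hF : F.IsAcyclic) :
    ∃ R : V → V → Prop, (∀ x y, R x y → F.Adj x y) ∧
      (∀ x y, F.Adj x y → R x y ∨ R y x) ∧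
      (∀ x y z, R x y → R x z → y = z) := by
  classical
  let root : V → V := fun x => (F.connectedComponentMk x).out
  have hroot : ∀ x : V, F.Reachable x (root x) := by
    intro x
    have : F.connectedComponentMk (root x) = F.connectedComponentMk x :=
      (F.connectedComponentMk x).out_eq
    exact (ConnectedComponent.eq.mp this).symm
  refine ⟨fun x y => F.Adj x y ∧ ¬(F.deleteEdges {s(x,y)}).Reachable x (root x),
    fun x y h => h.1, ?_, ?_⟩
  · intro x y hadj
    have hrooteq : root x = root y := by
      show (F.connectedComponentMk x).out = (F.connectedComponentMk y).out
      rw [ConnectedComponent.sound hadj.reachable]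
    have hbridge : ¬(F.deleteEdges {s(x,y)}).Reachable x y := by
      have := (isAcyclic_iff_forall_adj_isBridge.mp hF) hadj
      rw [isBridge_iff] at this
      exact this
    by_cases hc : (F.deleteEdges {s(x,y)}).Reachable x (root x)
    · right
      refine ⟨hadj.symm, ?_⟩
      intro hy
      rw [← hrooteq] at hy
      have hy' : (F.deleteEdges {s(x,y)}).Reachable y (root x) := by
        have : s(y,x) = s(x,y) := Sym2.eq_swap
        rwa [this] at hy
      exact hbridge (hc.trans hy'.symm)
    · left; exact ⟨hadj, hc⟩
  · rintro x y z ⟨hxy, hny⟩ ⟨hxz, hnz⟩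
    obtain ⟨w⟩ := hroot x
    let p := w.toPath
    have hmem : ∀ u : V, F.Adj x u → ¬(F.deleteEdges {s(x,u)}).Reachable x (root x) →
        s(x,u) ∈ (p : F.Walk x (root x)).edges := by
      intro u _ hnu
      by_contra hne
      exact hnu ⟨(p : F.Walk x (root x)).toDeleteEdges {s(x,u)}
        (fun e he => by simp; rintro rfl; exact hne he)⟩
    exact path_start_unique_edge (p : F.Walk x (root x)) p.2
      (hmem y hxy hny) (hmem z hxz hnz)


private lemma walk_count (G : SimpleGraph V) (b Δ : ℕ) (hb : 1 ≤ b) (hΔ : 1 ≤ Δ)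
    (Out : V → Finset V)
    (hOcov : ∀ x y, G.Adj x y → y ∈ Out x ∨ x ∈ Out y)
    (houtb : ∀ x, (Out x).card ≤ b)
    (hdeg : ∀ v : V, (G.neighborSet v).ncard ≤ Δ) (i : ℕ) :
    Nat.card {f : Fin (i+1) → V // ∀ t : Fin i, G.Adj (f t.castSucc) (f t.succ)}
      ≤ Fintype.card V * ((2*b)^i * Δ^(i/2)) := by
  classical
  set n := Fintype.card V with hn
  set nbr : V → Finset V := fun v => (Set.toFinite (G.neighborSet v)).toFinset with hnbr
  have hnbr_mem : ∀ v y, y ∈ nbr v ↔ G.Adj v y := by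
    intro v y
    simp only [hnbr, Set.Finite.mem_toFinset, SimpleGraph.mem_neighborSet]
  have hnbr_card : ∀ v, (nbr v).card ≤ Δ := by
    intro v
    rw [hnbr]
    rw [← Set.ncard_eq_toFinset_card]
    exact hdeg v
  set W := {f : Fin (i+1) → V // ∀ t : Fin i, G.Adj (f t.castSucc) (f t.succ)} with hW
  set pat : W → (Fin i → Bool) := fun w t => decide (w.1 t.succ ∈ Out (w.1 t.castSucc))
    with hpat
  have hsplit : Nat.card W = ∑ s : Fin i → Bool, Nat.card {w : W // pat w = s} := by
    rw [← Nat.card_congr (Equiv.sigmaFiberEquiv pat), Nat.card_eq_fintype_card,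
      Fintype.card_sigma]
    exact Finset.sum_congr rfl fun s _ => (Nat.card_eq_fintype_card).symm
  have hfiber : ∀ s : Fin i → Bool,
      Nat.card {w : W // pat w = s} ≤ n * (b^i * Δ^(i/2)) := by
    intro s
    set s' : ℕ → Bool := fun m => if h : m < i then s ⟨m, h⟩ else false with hs'
    have hs'val : ∀ t : Fin i, s' t.val = s t := by
      intro t; simp only [hs', t.isLt, dif_pos]
    -- the two step systems
    set stepR : ℕ → V → Finset V :=
      fun m x => if s' m then Out x else (nbr x).filter (fun y => x ∈ Out y)
      with hstepR
    set cR : ℕ → ℕ := fun m => if s' m then b else Δ with hcR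
    have hcRle : ∀ t x, (stepR t x).card ≤ cR t := by
      intro t x
      simp only [hstepR, hcR]
      by_cases h : s' t
      · simp only [h, if_true]; exact houtb x
      · simp only [h, if_false, Bool.false_eq_true]
        exact le_trans (Finset.card_filter_le _ _) (hnbr_card x)
    set stepL : ℕ → V → Finset V :=
      fun m y => if s' m then nbr y else Out y with hstepL
    set cL : ℕ → ℕ := fun m => if s' m then Δ else b with hcL
    have hcLle : ∀ t y, (stepL t y).card ≤ cL t := by
      intro t y
      simp only [hstepL, hcL]
      by_cases h : s' t
      · simp only [h, if_true]; exact hnbr_card y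
      · simp only [h, if_false, Bool.false_eq_true]; exact houtb y
    -- membership facts for walks in the fiber
    have hmem : ∀ w : W, pat w = s → ∀ t : Fin i,
        (s t = true → w.1 t.succ ∈ Out (w.1 t.castSucc)) ∧
        (s t = false → w.1 t.castSucc ∈ Out (w.1 t.succ)) := by
      intro w hw t
      constructor
      · intro hst
        have := congrFun hw t
        rw [hst] at this
        simpa only [hpat, decide_eq_true_eq] using this
      · intro hst
        have := congrFun hw t
        rw [hst] at this
        have hnot : ¬ (w.1 t.succ ∈ Out (w.1 t.castSucc)) := by
          simpa only [hpat, decide_eq_false_iff_not] using this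
        rcases hOcov _ _ (w.2 t) with h | h
        · exact absurd h hnot
        · exact h
    -- right injection
    have hR : Nat.card {w : W // pat w = s}
        ≤ n * ∏ t ∈ Finset.range i, cR t := by
      refine le_trans (Nat.card_le_card_of_injective
        (fun w => (⟨w.1.1, ?_⟩ : {f : Fin (i+1) → V //
          ∀ t : Fin i, f t.succ ∈ stepR t.val (f t.castSucc)})) ?_)
        (chain_count_right i stepR cR hcRle)
      · intro t
        have hm := hmem w.1 w.2 t
        simp only [hstepR, hs'val t]
        cases hst : s t
        · simp only [Bool.false_eq_true, if_false, Finset.mem_filter]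
          refine ⟨?_, hm.2 hst⟩
          rw [hnbr_mem]
          exact w.1.2 t
        · simp only [if_true]
          exact hm.1 hst
      · intro w w' h
        have h2 := congrArg Subtype.val h
        exact Subtype.ext (Subtype.ext h2)
    -- left injection
    have hL : Nat.card {w : W // pat w = s}
        ≤ n * ∏ t ∈ Finset.range i, cL t := by
      refine le_trans (Nat.card_le_card_of_injective
        (fun w => (⟨w.1.1, ?_⟩ : {f : Fin (i+1) → V //
          ∀ t : Fin i, f t.castSucc ∈ stepL t.val (f t.succ)})) ?_)
        (chain_count_left i stepL cL hcLle)
      · intro t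
        have hm := hmem w.1 w.2 t
        simp only [hstepL, hs'val t]
        cases hst : s t
        · simp only [Bool.false_eq_true, if_false]
          exact hm.2 hst
        · simp only [if_true]
          rw [hnbr_mem]
          exact (w.1.2 t).symm
      · intro w w' h
        have h2 := congrArg Subtype.val h
        exact Subtype.ext (Subtype.ext h2)
    -- compute the products
    set p := ((Finset.range i).filter (fun t => s' t = true)).card with hp
    set q := ((Finset.range i).filter (fun t => ¬ (s' t = true))).card with hq
    have hpq : p + q = i := by
      rw [hp, hq, Finset.card_filter_add_card_filter_not, Finset.card_range]
    have hprodR : ∏ t ∈ Finset.range i, cR t = b^p * Δ^q := by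
      rw [hcR, Finset.prod_ite, Finset.prod_const, Finset.prod_const]
    have hprodL : ∏ t ∈ Finset.range i, cL t = Δ^p * b^q := by
      rw [hcL, Finset.prod_ite, Finset.prod_const, Finset.prod_const]
    by_cases hqle : q ≤ i/2
    · refine le_trans hR ?_
      rw [hprodR]
      apply Nat.mul_le_mul_left
      exact Nat.mul_le_mul (Nat.pow_le_pow_right hb (by omega))
        (Nat.pow_le_pow_right hΔ hqle)
    · have hple : p ≤ i/2 := by omega
      refine le_trans hL ?_
      rw [hprodL]
      apply Nat.mul_le_mul_left
      calc Δ^p * b^q ≤ Δ^(i/2) * b^i :=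
            Nat.mul_le_mul (Nat.pow_le_pow_right hΔ hple)
              (Nat.pow_le_pow_right hb (by omega))
        _ = b^i * Δ^(i/2) := Nat.mul_comm _ _
  calc Nat.card W = ∑ s : Fin i → Bool, Nat.card {w : W // pat w = s} := hsplit
    _ ≤ ∑ _s : Fin i → Bool, n * (b^i * Δ^(i/2)) := Finset.sum_le_sum (fun s _ => hfiber s)
    _ = 2^i * (n * (b^i * Δ^(i/2))) := by
        rw [Finset.sum_const, Finset.card_univ, Fintype.card_fun]
        simp [mul_comm]
    _ = n * ((2*b)^i * Δ^(i/2)) := by ring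
  

end AuxiliaryLemmas

/-- Every graph with arboricity at most `b`, diameter at most `k`, and maximum
degree at most `Δ` has at most `4k(2b)^k · Δ^{⌊k/2⌋} + 1` vertices. -/
theorem arboricity_upper_bound {V : Type*} [Fintype V] (G : SimpleGraph V) (b k Δ : ℕ)
    (harb : ArboricityLE G b)
    (hmax : ∀ v : V, (G.neighborSet v).ncard ≤ Δ)
    (hconn : G.Connected)
    (hdiam : ∀ u v : V, G.dist u v ≤ k) :
    Fintype.card V ≤ 4 * k * (2 * b) ^ k * Δ ^ (k / 2) + 1 := by
  classical
  set n := Fintype.card V with hn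
  by_cases hn1 : n ≤ 1
  · exact le_trans hn1 (Nat.le_add_left 1 _)
  push_neg at hn1
  -- there is an edge
  obtain ⟨u0, v0, huv0⟩ := Fintype.exists_pair_of_one_lt_card hn1
  have hadj : ∃ x y : V, G.Adj x y := by
    have hr : G.Reachable u0 v0 := hconn.preconnected u0 v0
    have hd : 0 < G.dist u0 v0 := hr.pos_dist_of_ne huv0
    obtain ⟨w, hw⟩ := hr.exists_walk_length_eq_dist
    have hlen : 0 < w.length := by omega
    exact ⟨w.getVert 0, w.getVert 1, w.adj_getVert_succ hlen⟩
  obtain ⟨x0, y0, hxy0⟩ := hadj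
  obtain ⟨Fo, hfor, hsup⟩ := harb
  -- Δ ≥ 1
  have hΔ : 1 ≤ Δ := by
    refine le_trans ?_ (hmax x0)
    rw [Nat.one_le_iff_ne_zero]
    intro h0
    have hpos : 0 < (G.neighborSet x0).ncard :=
      (Set.ncard_pos (Set.toFinite _)).mpr ⟨y0, hxy0⟩
    omega
  -- b ≥ 1
  have hb : 1 ≤ b := by
    rw [Nat.one_le_iff_ne_zero]
    rintro rfl
    rw [iSup_of_empty] at hsup
    rw [← hsup] at hxy0
    exact hxy0
  -- orientation of the union of forests
  have hforor := fun i => forest_orientation (Fo i) (hfor i)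
  choose R hRsub hRcov hRuniq using hforor
  set Out : V → Finset V := fun x => Finset.univ.filter (fun y => ∃ i, R i x y) with hOut
  have houtb : ∀ x, (Out x).card ≤ b := by
    intro x
    have := Finset.card_le_card_of_injOn
      (f := fun y => if h : ∃ i, R i x y then h.choose else (⟨0, hb⟩ : Fin b))
      (s := Out x) (t := Finset.univ)
      (fun a _ => Finset.mem_univ _) ?_
    · simpa using this
    · intro y hy y' hy' he
      rw [hOut, Finset.mem_coe, Finset.mem_filter] at hy hy'
      obtain ⟨-, hDy⟩ := hy
      obtain ⟨-, hDy'⟩ := hy'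
      dsimp only at he
      rw [dif_pos hDy, dif_pos hDy'] at he
      have h1 := hDy.choose_spec
      have h2 := hDy'.choose_spec
      rw [he] at h1
      exact hRuniq _ x y y' h1 h2
  have hle : ∀ i, Fo i ≤ G := by
    intro i
    rw [← hsup]
    exact le_iSup Fo i
  have hOcov : ∀ x y, G.Adj x y → y ∈ Out x ∨ x ∈ Out y := by
    intro x y hxy
    rw [← hsup, iSup_adj] at hxy
    obtain ⟨i, hi⟩ := hxy
    rcases hRcov i x y hi with h | h
    · left; rw [hOut, Finset.mem_filter]; exact ⟨Finset.mem_univ _, i, h⟩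
    · right; rw [hOut, Finset.mem_filter]; exact ⟨Finset.mem_univ _, i, h⟩
  -- the injection from pairs to walks
  set Wt : ℕ → Type _ := fun i => {f : Fin (i+1) → V //
    ∀ t : Fin i, G.Adj (f t.castSucc) (f t.succ)} with hWt
  have hpairs : n * n ≤ ∑ i : Fin (k+1), Nat.card (Wt i.val) := by
    have hψ : ∀ p : V × V, ∃ z : Σ i : Fin (k+1), Wt i.val,
        z.2.1 0 = p.1 ∧ z.2.1 (Fin.last z.1.val) = p.2 := by
      rintro ⟨u, v⟩
      have hr : G.Reachable u v := hconn.preconnected u v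
      obtain ⟨w, hw⟩ := hr.exists_walk_length_eq_dist
      have hik : G.dist u v < k + 1 := Nat.lt_succ_of_le (hdiam u v)
      refine ⟨⟨⟨G.dist u v, hik⟩, ⟨fun t => w.getVert t.val, ?_⟩⟩, ?_, ?_⟩
      · intro t
        have ht : t.val < w.length := by
          rw [hw]; exact t.isLt
        have := w.adj_getVert_succ ht
        simpa [Fin.coe_castSucc, Fin.val_succ] using this
      · simp only []
        exact w.getVert_zero
      · simp only [Fin.val_last]
        rw [← hw]
        exact w.getVert_length
    choose ψ hψ1 hψ2 using hψ
    have hinj : Function.Injective ψ := by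
      intro p q h
      have h1 : p.1 = q.1 := by
        rw [← hψ1 p, ← hψ1 q, h]
      have h2 : p.2 = q.2 := by
        rw [← hψ2 p, ← hψ2 q, h]
      exact Prod.ext h1 h2
    calc n * n = Nat.card (V × V) := by
          rw [Nat.card_prod, Nat.card_eq_fintype_card]
      _ ≤ Nat.card (Σ i : Fin (k+1), Wt i.val) := Nat.card_le_card_of_injective ψ hinj
      _ = ∑ i : Fin (k+1), Nat.card (Wt i.val) := by
          rw [Nat.card_eq_fintype_card, Fintype.card_sigma]
          exact Finset.sum_congr rfl fun s _ => (Nat.card_eq_fintype_card).symm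
  -- apply the walk count
  have hwc : ∀ i : ℕ, Nat.card (Wt i) ≤ n * ((2*b)^i * Δ^(i/2)) :=
    fun i => walk_count G b Δ hb hΔ Out hOcov houtb hmax i
  have hsum : n * n ≤ n * ∑ i ∈ Finset.range (k+1), (2*b)^i * Δ^(i/2) := by
    refine le_trans hpairs ?_
    rw [Finset.mul_sum]
    rw [← Fin.sum_univ_eq_sum_range (fun i => n * ((2*b)^i * Δ^(i/2))) (k+1)]
    exact Finset.sum_le_sum fun i _ => hwc i.val
  have hnle : n ≤ ∑ i ∈ Finset.range (k+1), (2*b)^i * Δ^(i/2) :=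
    Nat.le_of_mul_le_mul_left hsum (by omega)
  have hfinal : ∑ i ∈ Finset.range (k+1), (2*b)^i * Δ^(i/2)
      ≤ k * ((2*b)^k * Δ^(k/2)) + 1 := by
    rw [Finset.sum_range_succ']
    simp only [pow_zero, Nat.zero_div, one_mul]
    apply Nat.add_le_add_right
    refine le_trans (Finset.sum_le_card_nsmul _ _ ((2*b)^k * Δ^(k/2)) ?_) ?_
    · intro x hx
      rw [Finset.mem_range] at hx
      exact Nat.mul_le_mul
        (Nat.pow_le_pow_right (by omega) (by omega))
        (Nat.pow_le_pow_right hΔ (Nat.div_le_div_right (by omega)))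
    · rw [Finset.card_range, smul_eq_mul]
  have : n ≤ k * ((2*b)^k * Δ^(k/2)) + 1 := le_trans hnle hfinal
  refine le_trans this ?_
  apply Nat.add_le_add_right
  calc k * ((2*b)^k * Δ^(k/2)) = k * (2*b)^k * Δ^(k/2) := by ring
    _ ≤ 4 * k * (2*b)^k * Δ^(k/2) := by
        apply Nat.mul_le_mul_right
        apply Nat.mul_le_mul_right
        omega
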